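/- Let (X, 𝒜, μ) be a probability space, T : X → X an ergodic measure-preserving transformation, and g : X → ℝ an integrable function. Then the following are equivalent: (i) there exists a constant C such that for μ-almost every x ∈ X and every n ∈ ℕ, |∑_{i=0}^{n−1} g(T^i x) − n·∫_X g dμ| ≤ C; (ii) g is cohomologous to a constant in L^∞, i.e. there exist c ∈ ℝ and an essentially bounded measurable function h : X → ℝ such that g = c + h∘T − h holds μ-almost everywhere. -/
import Mathlib


open MeasureTheory
open Filter

/-- For an ergodic measure-preserving transformation `T` of a probability space
and an integrable function `g`, the centered Birkhoff sums are uniformly bounded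
almost everywhere if and only if `g` is cohomologous to a constant in `L^∞`. -/
theorem bounded_birkhoff_sums_iff_cohomologous_to_constant
    {X : Type*} [MeasurableSpace X] (μ : Measure X) [IsProbabilityMeasure μ]
    (T : X → X) (hT : Ergodic T μ)
    (g : X → ℝ) (hg : Integrable g μ) :
    (∃ C : ℝ, ∀ᵐ x ∂μ, ∀ n : ℕ,
        |(∑ i ∈ Finset.range n, g (T^[i] x)) - (n : ℝ) * ∫ y, g y ∂μ| ≤ C) ↔
    (∃ (c : ℝ) (h : X → ℝ), Measurable h ∧ (∃ M : ℝ, ∀ᵐ x ∂μ, |h x| ≤ M) ∧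
        (∀ᵐ x ∂μ, g x = c + h (T x) - h x)) := by
  have hTm : Measurable T := hT.toMeasurePreserving.measurable
  have hTiter : ∀ i : ℕ, MeasurePreserving (T^[i]) μ μ :=
    fun i => hT.toMeasurePreserving.iterate i
  set c : ℝ := ∫ y, g y ∂μ with hc
  -- measurable representative of g
  set g' : X → ℝ := hg.1.mk g with hg'
  have hg'meas : Measurable g' := hg.1.stronglyMeasurable_mk.measurable
  have hgg' : g =ᵐ[μ] g' := hg.1.ae_eq_mk
  -- a.e., g and g' agree at all iterates
  have hiter_eq : ∀ᵐ x ∂μ, ∀ i : ℕ, g (T^[i] x) = g' (T^[i] x) := by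
    rw [MeasureTheory.ae_all_iff]
    intro i
    exact (hTiter i).quasiMeasurePreserving.ae_eq_comp hgg'
  set B : ℕ → X → ℝ := fun n x => (∑ i ∈ Finset.range n, g' (T^[i] x)) - (n : ℝ) * c
    with hB
  have hBmeas : ∀ n, Measurable (B n) := by
    intro n
    apply Measurable.sub ?_ measurable_const
    exact Finset.measurable_sum _ fun i _ => hg'meas.comp (hTm.iterate i)
  -- exact cocycle identity for B
  have hBkey : ∀ (x : X) (n : ℕ), B n (T x) = B (n + 1) x + (c - g' x) := by
    intro x n
    have h1 : ∀ i : ℕ, g' (T^[i] (T x)) = g' (T^[i + 1] x) := by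
      intro i; rw [Function.iterate_succ_apply]
    simp only [hB]
    rw [Finset.sum_congr rfl fun i _ => h1 i]
    have h2 : (∑ i ∈ Finset.range (n + 1), g' (T^[i] x)) =
        (∑ i ∈ Finset.range n, g' (T^[i + 1] x)) + g' (T^[0] x) := by
      rw [Finset.sum_range_succ']
    rw [h2]
    push_cast
    simp only [Function.iterate_zero_apply]
    ring
  constructor
  · rintro ⟨C, hC⟩
    -- a.e., |B n x| ≤ C for all n
    have hBbd : ∀ᵐ x ∂μ, ∀ n : ℕ, |B n x| ≤ C := by
      filter_upwards [hC, hiter_eq] with x hx hx' n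
      have : B n x = (∑ i ∈ Finset.range n, g (T^[i] x)) - (n : ℝ) * c := by
        simp only [hB]
        rw [Finset.sum_congr rfl fun i _ => (hx' i).symm]
      rw [this]; exact hx n
    set L : X → ℝ := fun x => limsup (fun n => B n x) atTop with hL
    have hLmeas : Measurable L := Measurable.limsup fun n => hBmeas n
    refine ⟨c, fun x => -L x, hLmeas.neg, ⟨C, ?_⟩, ?_⟩
    · filter_upwards [hBbd] with x hx
      rw [abs_neg, abs_le]
      have hbddA : IsBoundedUnder (· ≤ ·) atTop (fun n => B n x) :=
        isBoundedUnder_of ⟨C, fun (n : ℕ) => (abs_le.1 (hx n)).2⟩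
      have hbddB : IsBoundedUnder (· ≥ ·) atTop (fun n => B n x) :=
        isBoundedUnder_of ⟨-C, fun (n : ℕ) => (abs_le.1 (hx n)).1⟩
      constructor
      · exact le_limsup_of_frequently_le
          (Frequently.of_forall fun n => (abs_le.1 (hx n)).1) hbddA
      · exact limsup_le_of_le hbddB.isCoboundedUnder_le
          (Eventually.of_forall fun n => (abs_le.1 (hx n)).2)
    · -- the cohomology equation
      filter_upwards [hBbd, hgg'] with x hx hx'
      have hbddA : IsBoundedUnder (· ≤ ·) atTop (fun n => B (n + 1) x) :=
        isBoundedUnder_of ⟨C, fun (n : ℕ) => (abs_le.1 (hx (n + 1))).2⟩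
      have hbddB : IsBoundedUnder (· ≥ ·) atTop (fun n => B (n + 1) x) :=
        isBoundedUnder_of ⟨-C, fun (n : ℕ) => (abs_le.1 (hx (n + 1))).1⟩
      have key : L (T x) = L x + (c - g' x) := by
        have e1 : (fun n => B n (T x)) = fun n => B (n + 1) x + (c - g' x) := by
          funext n; exact hBkey x n
        have e2 : limsup (fun n => B (n + 1) x + (c - g' x)) atTop
            = limsup (fun n => B (n + 1) x) atTop + (c - g' x) :=
          limsup_add_const atTop (fun n => B (n + 1) x) (c - g' x) hbddA
            hbddB.isCoboundedUnder_le
        have e3 : limsup (fun n => B (n + 1) x) atTop = limsup (fun n => B n x) atTop :=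
          limsup_nat_add (fun n => B n x) 1
        simp only [hL, e1, e2, e3]
      rw [hx']
      have := key
      linarith [key]
  · rintro ⟨c₀, h, hmeas, ⟨M, hM⟩, heq⟩
    -- h is integrable
    have hhint : Integrable h μ :=
      (integrable_const M).mono' hmeas.aestronglyMeasurable
        (by filter_upwards [hM] with x hx; simpa [Real.norm_eq_abs] using hx)
    have hhTint : Integrable (h ∘ T) μ :=
      (hT.toMeasurePreserving.integrable_comp hmeas.aestronglyMeasurable).2 hhint
    -- the constant must be the mean
    have hmean : c = c₀ := by
      have h1 : ∫ x, g x ∂μ = ∫ x, (c₀ + h (T x) - h x) ∂μ :=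
        integral_congr_ae heq
      have h2 : ∫ x, h (T x) ∂μ = ∫ x, h x ∂μ := by
        have := integral_map (μ := μ) (φ := T) hTm.aemeasurable
          (f := h) (by rw [hT.toMeasurePreserving.map_eq]; exact hmeas.aestronglyMeasurable)
        rw [hT.toMeasurePreserving.map_eq] at this
        exact this.symm
      have h3 : ∫ x, (c₀ + h (T x) - h x) ∂μ
          = (∫ x, (c₀ + h (T x)) ∂μ) - ∫ x, h x ∂μ :=
        integral_sub ((integrable_const c₀).add (hhTint : Integrable (fun x => h (T x)) μ)) hhint
      have hhTint' : Integrable (fun x => h (T x)) μ := hhTint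
      have h4 : ∫ x, (c₀ + h (T x)) ∂μ = c₀ + ∫ x, h (T x) ∂μ := by
        rw [integral_add (integrable_const c₀) hhTint', integral_const]
        simp
      rw [hc, h1, h3, h4, h2]; ring
    -- pull back the cohomology equation and the bound through iterates
    have hall : ∀ᵐ x ∂μ, ∀ i : ℕ,
        g (T^[i] x) = c₀ + h (T^[i + 1] x) - h (T^[i] x) ∧ |h (T^[i] x)| ≤ M := by
      rw [MeasureTheory.ae_all_iff]
      intro i
      have e1 := (hTiter i).quasiMeasurePreserving.ae_eq_comp heq
      have e2 : ∀ᵐ x ∂μ, |h (T^[i] x)| ≤ M := by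
        have := (hTiter i).quasiMeasurePreserving.ae (p := fun x => |h x| ≤ M) hM
        exact this
      filter_upwards [e1, e2] with x hx hx'
      refine ⟨?_, hx'⟩
      have : g (T^[i] x) = c₀ + h (T (T^[i] x)) - h (T^[i] x) := hx
      rwa [← Function.iterate_succ_apply' T i x] at this
    refine ⟨2 * M, ?_⟩
    filter_upwards [hall, hM] with x hx hx0
    intro n
    have htel : (∑ i ∈ Finset.range n, g (T^[i] x)) =
        (n : ℝ) * c₀ + (h (T^[n] x) - h (T^[0] x)) := by
      have : ∀ i ∈ Finset.range n,
          g (T^[i] x) = c₀ + (h (T^[i + 1] x) - h (T^[i] x)) := by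
        intro i _
        have := (hx i).1
        linarith
      rw [Finset.sum_congr rfl this, Finset.sum_add_distrib, Finset.sum_const,
        Finset.card_range, Finset.sum_range_sub (fun i => h (T^[i] x))]
      simp [mul_comm]
    rw [htel, hmean]
    have h1 : |h (T^[n] x)| ≤ M := (hx n).2
    have h2 : |h (T^[0] x)| ≤ M := (hx 0).2
    have : |(n : ℝ) * c₀ + (h (T^[n] x) - h (T^[0] x)) - (n : ℝ) * c₀|
        = |h (T^[n] x) - h (T^[0] x)| := by ring_nf
    calc |(n : ℝ) * c₀ + (h (T^[n] x) - h (T^[0] x)) - (n : ℝ) * c₀|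
        = |h (T^[n] x) - h (T^[0] x)| := this
      _ ≤ |h (T^[n] x)| + |h (T^[0] x)| := abs_sub _ _
      _ ≤ M + M := add_le_add h1 h2
      _ = 2 * M := by ring
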